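/- arXiv:2101.03557 — 2 statements merged into one kernel-verified Lean document; each statement's English description precedes it below -/
import Mathlib

section
/- For every integer n ≥ 1 and every real number x, the improper integral defining the higher order Airy function converges: the limit as R → ∞ of (1/π)·∫_0^R cos( y^{2n+1}/(2n+1) + x·y ) dy exists in ℝ. Its value is denoted Ai_n(x). -/
open Real Filter Set intervalIntegral

/-- For every integer `n ≥ 1` and every real `x`, the improper integral
defining the higher order Airy function converges: the limit as `R → ∞` of
`(1/π) ∫_0^R cos( y^(2n+1)/(2n+1) + x·y ) dy` exists in `ℝ`. -/
theorem higher_airy_integral_converges (n : ℕ) (hn : 1 ≤ n) (x : ℝ) :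
    ∃ L : ℝ,
      Filter.Tendsto
        (fun R : ℝ =>
          (1 / Real.pi) * ∫ y in (0:ℝ)..R, Real.cos (y ^ (2*n+1) / (2*(n:ℝ)+1) + x * y))
        Filter.atTop (nhds L) := by
  set φ : ℝ → ℝ := fun y => y ^ (2*n+1) / (2*(n:ℝ)+1) + x * y with hφdef
  set p : ℝ → ℝ := fun y => y ^ (2*n) + x with hpdef
  set p' : ℝ → ℝ := fun y => (2*(n:ℝ)) * y ^ (2*n-1) with hp'def
  have hden : (2*(n:ℝ)+1) ≠ 0 := by positivity
  have hφc : Continuous fun y => Real.cos (φ y) := by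
    apply Real.continuous_cos.comp
    fun_prop
  have hpc : Continuous p := by fun_prop
  have hp'c : Continuous p' := by fun_prop
  have hφd : ∀ y : ℝ, HasDerivAt φ (p y) y := by
    intro y
    have h1 : HasDerivAt (fun y : ℝ => y ^ (2*n+1) / (2*(n:ℝ)+1))
        ((((2*n+1 : ℕ)) : ℝ) * y ^ (2*n+1-1) / (2*(n:ℝ)+1)) y :=
      (hasDerivAt_pow (2*n+1) y).div_const _
    have h2 : HasDerivAt (fun y : ℝ => x * y) x y := by
      simpa using (hasDerivAt_id y).const_mul x
    have := h1.add h2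
    refine this.congr_deriv ?_
    have : 2*n+1-1 = 2*n := by omega
    rw [this]
    push_cast
    field_simp
    rfl
  have hpd : ∀ y : ℝ, HasDerivAt p (p' y) y := by
    intro y
    have := (hasDerivAt_pow (2*n) y).add_const x
    refine this.congr_deriv ?_
    push_cast [hp'def]
    ring
  -- g = sin φ / p
  set g : ℝ → ℝ := fun y => Real.sin (φ y) / p y with hgdef
  have hgd : ∀ y : ℝ, p y ≠ 0 →
      HasDerivAt g (Real.cos (φ y) - Real.sin (φ y) * (p' y / (p y)^2)) y := by
    intro y hy
    have hs : HasDerivAt (fun y => Real.sin (φ y)) (Real.cos (φ y) * p y) y :=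
      (Real.hasDerivAt_sin (φ y)).comp y (hφd y)
    have := hs.div (hpd y) hy
    refine this.congr_deriv ?_
    field_simp
  -- r = 1 / p
  set r : ℝ → ℝ := fun y => (p y)⁻¹ with hrdef
  have hrd : ∀ y : ℝ, p y ≠ 0 → HasDerivAt r (-(p' y / (p y)^2)) y := by
    intro y hy
    have := (hpd y).inv hy
    refine this.congr_deriv ?_
    ring
  set A : ℝ := |x| + 1 with hAdef
  have hA1 : (1:ℝ) ≤ A := by
    have := abs_nonneg x; linarith
  have hpy : ∀ y : ℝ, A ≤ y → 1 ≤ p y := by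
    intro y hy
    have hy1 : (1:ℝ) ≤ y := le_trans hA1 hy
    have h2n : 2*n ≠ 0 := by omega
    have : y ≤ y ^ (2*n) := le_self_pow₀ hy1 h2n
    have hx : -|x| ≤ x := neg_abs_le x
    simp only [hpdef]
    linarith
  have hmono : ∀ a b : ℝ, 0 ≤ a → a ≤ b → p a ≤ p b := by
    intro a b ha hab
    have := pow_le_pow_left₀ ha hab (2*n)
    simp only [hpdef]; linarith
  set F : ℝ → ℝ := fun R => ∫ y in (0:ℝ)..R, Real.cos (φ y) with hFdef
  have hint : ∀ a b : ℝ, IntervalIntegrable (fun y => Real.cos (φ y)) MeasureTheory.volume a b :=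
    fun a b => hφc.intervalIntegrable a b
  have hC : CauchySeq F := by
    rw [Metric.cauchySeq_iff']
    intro ε hε
    set N : ℝ := max A (3/ε + |x| + 1) with hNdef
    refine ⟨N, ?_⟩
    intro b hb
    have hNA : A ≤ N := le_max_left _ _
    have hN0 : 0 ≤ N := le_trans (by linarith) hNA
    have hbA : A ≤ b := le_trans hNA hb
    have hpN : 1 ≤ p N := hpy N hNA
    have hpNpos : 0 < p N := by linarith
    -- p y ≥ p N > 0 on [N, b]
    have hkey : ∀ y ∈ Set.uIcc N b, p N ≤ p y := by
      intro y hy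
      rw [Set.uIcc_of_le hb] at hy
      exact hmono N y hN0 hy.1
    have hne : ∀ y ∈ Set.uIcc N b, p y ≠ 0 := by
      intro y hy
      have := hkey y hy
      exact ne_of_gt (lt_of_lt_of_le hpNpos this)
    -- continuity of the correction term
    have hqcont : ContinuousOn (fun y => Real.sin (φ y) * (p' y / (p y)^2)) (Set.uIcc N b) := by
      apply ContinuousOn.mul
      · exact (Real.continuous_sin.comp (by fun_prop : Continuous φ)).continuousOn
      · exact hp'c.continuousOn.div ((hpc.pow 2).continuousOn)
          (fun y hy => pow_ne_zero 2 (hne y hy))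
    have hqint : IntervalIntegrable (fun y => Real.sin (φ y) * (p' y / (p y)^2))
        MeasureTheory.volume N b := hqcont.intervalIntegrable
    have hqcont2 : ContinuousOn (fun y => p' y / (p y)^2) (Set.uIcc N b) :=
      hp'c.continuousOn.div ((hpc.pow 2).continuousOn)
        (fun y hy => pow_ne_zero 2 (hne y hy))
    have hqint2 : IntervalIntegrable (fun y => p' y / (p y)^2)
        MeasureTheory.volume N b := hqcont2.intervalIntegrable
    -- FTC for g
    have hftc : ∫ y in N..b, (Real.cos (φ y) - Real.sin (φ y) * (p' y / (p y)^2)) =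
        g b - g N := by
      apply intervalIntegral.integral_eq_sub_of_hasDerivAt
      · exact fun y hy => hgd y (hne y hy)
      · exact ((hφc.continuousOn).sub hqcont).intervalIntegrable
    have hsplit : ∫ y in N..b, Real.cos (φ y) =
        g b - g N + ∫ y in N..b, Real.sin (φ y) * (p' y / (p y)^2) := by
      rw [← hftc, intervalIntegral.integral_sub (hint N b) hqint]
      ring
    -- FTC for r
    have hftcr : ∫ y in N..b, (-(p' y / (p y)^2)) = r b - r N := by
      apply intervalIntegral.integral_eq_sub_of_hasDerivAt
      · exact fun y hy => hrd y (hne y hy)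
      · exact (hqcont2.neg).intervalIntegrable
    have hrint : ∫ y in N..b, p' y / (p y)^2 = r N - r b := by
      have := hftcr
      rw [intervalIntegral.integral_neg] at this
      linarith
    -- bound the correction integral
    have hqbound : |∫ y in N..b, Real.sin (φ y) * (p' y / (p y)^2)| ≤ 1 / p N := by
      have h1 : |∫ y in N..b, Real.sin (φ y) * (p' y / (p y)^2)| ≤
          ∫ y in N..b, |Real.sin (φ y) * (p' y / (p y)^2)| := by
        exact intervalIntegral.norm_integral_le_integral_norm (μ := MeasureTheory.volume) (f := fun y =>
          Real.sin (φ y) * (p' y / (p y)^2)) hb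
      have h2 : ∫ y in N..b, |Real.sin (φ y) * (p' y / (p y)^2)| ≤
          ∫ y in N..b, p' y / (p y)^2 := by
        apply intervalIntegral.integral_mono_on hb _ hqint2
        · intro y hy
          rw [abs_mul]
          have hyu : y ∈ Set.uIcc N b := by rw [Set.uIcc_of_le hb]; exact hy
          have hppos : 0 < p y := lt_of_lt_of_le hpNpos (hkey y hyu)
          have hy0 : 0 ≤ y := le_trans hN0 hy.1
          have hqnn : 0 ≤ p' y / (p y)^2 := by
            apply div_nonneg
            · simp only [hp'def]; positivity
            · positivity
          calc |Real.sin (φ y)| * |p' y / (p y)^2| ≤ 1 * |p' y / (p y)^2| := by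
                apply mul_le_mul_of_nonneg_right (Real.abs_sin_le_one _) (abs_nonneg _)
            _ = p' y / (p y)^2 := by rw [one_mul, abs_of_nonneg hqnn]
        · exact hqint.abs
      have h3 : ∫ y in N..b, p' y / (p y)^2 ≤ 1 / p N := by
        rw [hrint]
        have hpb : 0 < p b := lt_of_lt_of_le hpNpos
          (hkey b (by rw [Set.uIcc_of_le hb]; exact ⟨hb, le_refl b⟩))
        have : 0 ≤ r b := by simp only [hrdef]; positivity
        simp only [hrdef, one_div]
        linarith
      linarith
    have hgbound : ∀ y : ℝ, y ∈ Set.uIcc N b → |g y| ≤ 1 / p N := by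
      intro y hy
      have hppos : 0 < p y := lt_of_lt_of_le hpNpos (hkey y hy)
      simp only [hgdef]
      rw [abs_div, abs_of_pos hppos, div_le_div_iff₀ hppos hpNpos, one_mul]
      calc |Real.sin (φ y)| * p N ≤ 1 * p N :=
            mul_le_mul_of_nonneg_right (Real.abs_sin_le_one _) (le_of_lt hpNpos)
        _ = p N := one_mul _
        _ ≤ p y := hkey y hy
    -- the distance bound
    have hFdiff : F b - F N = ∫ y in N..b, Real.cos (φ y) := by
      simp only [hFdef]
      rw [← intervalIntegral.integral_interval_sub_left (hint 0 b) (hint 0 N)]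
    have hdist : |F b - F N| ≤ 3 / p N := by
      rw [hFdiff, hsplit]
      have h1 := hgbound b (by rw [Set.uIcc_of_le hb]; exact ⟨hb, le_refl b⟩)
      have h2 := hgbound N (by rw [Set.uIcc_of_le hb]; exact ⟨le_refl N, hb⟩)
      calc |g b - g N + ∫ y in N..b, Real.sin (φ y) * (p' y / (p y)^2)|
          ≤ |g b| + |g N| + |∫ y in N..b, Real.sin (φ y) * (p' y / (p y)^2)| := by
            exact (abs_add_le _ _).trans (by gcongr; exact abs_sub _ _)
        _ ≤ 1 / p N + 1 / p N + 1 / p N := by gcongr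
        _ = 3 / p N := by ring
    -- conclude: 3 / p N < ε
    have hεbound : 3 / p N < ε := by
      have hN3 : 3/ε + |x| + 1 ≤ N := le_max_right _ _
      have hN1 : (1:ℝ) ≤ N := le_trans hA1 hNA
      have h2n : 2*n ≠ 0 := by omega
      have hNpow : N ≤ N ^ (2*n) := le_self_pow₀ hN1 h2n
      have hx : -|x| ≤ x := neg_abs_le x
      have hpNbig : 3/ε + 1 ≤ p N := by
        simp only [hpdef]; linarith
      rw [div_lt_iff₀ hpNpos]
      have h3ε : 0 < 3/ε := by positivity
      calc (3:ℝ) = ε * (3/ε) := by field_simp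
        _ < ε * p N := by
            apply mul_lt_mul_of_pos_left _ hε
            linarith
    rw [Real.dist_eq]
    exact lt_of_le_of_lt hdist hεbound
  obtain ⟨L, hL⟩ := cauchySeq_tendsto_of_complete hC
  exact ⟨(1/Real.pi) * L, hL.const_mul (1/Real.pi)⟩
end

section
/- Let w be a weight function, t ∈ ℝ and n ≥ 1 an integer. Then for all x, y ∈ (0, ∞) the kernel K_{t,n} admits the representation K_{t,n}(x,y) = ∫_ℝ ( ∫_0^∞ Ai_n(x+z+s+t)·Ai_n(z+y+s+t) ds )·w'(z) dz, where the inner integral converges absolutely for every z ∈ ℝ and the outer integral converges absolutely. -/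
open MeasureTheory

/-- The higher order Airy function `Ai_n(x) = (1/π) lim_{R→∞} ∫_0^R cos(y^(2n+1)/(2n+1)+x·y) dy`. -/
noncomputable def Ain (n : ℕ) (x : ℝ) : ℝ :=
  Filter.limUnder Filter.atTop
    (fun R : ℝ => (1 / Real.pi) * ∫ y in (0:ℝ)..R, Real.cos (y ^ (2*n+1) / (2*(n:ℝ)+1) + x * y))

/-- The higher order finite temperature Airy kernel
`K_{t,n}(x,y) = ∫_ℝ Ai_n(x+z+t)·Ai_n(z+y+t)·w(z) dz`. -/
noncomputable def Kker (w : ℝ → ℝ) (t : ℝ) (n : ℕ) (x y : ℝ) : ℝ :=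
  ∫ z : ℝ, Ain n (x+z+t) * Ain n (z+y+t) * w z

open Filter Set intervalIntegral Real

namespace AiryAux

/-- phase -/
noncomputable def ph (n : ℕ) (x y : ℝ) : ℝ := y ^ (2*n+1) / (2*(n:ℝ)+1) + x * y

lemma hasDerivAt_ph (n : ℕ) (x y : ℝ) : HasDerivAt (ph n x) (y ^ (2*n) + x) y := by
  have h1 : HasDerivAt (fun y : ℝ => y ^ (2*n+1) / (2*(n:ℝ)+1))
      (((2*n+1 : ℕ) : ℝ) * y ^ (2*n) / (2*(n:ℝ)+1)) y := by
    simpa using (hasDerivAt_pow (2*n+1) y).div_const (2*(n:ℝ)+1)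
  have h2 : HasDerivAt (fun y : ℝ => x * y) x y := by
    simpa using (hasDerivAt_id y).const_mul x
  have := h1.add h2
  have hc : (2*(n:ℝ)+1) ≠ 0 := by positivity
  refine this.congr_deriv ?_
  push_cast
  field_simp
  try ring

/-- integration by parts bound -/
lemma ibp_bound (n : ℕ) (x a b : ℝ) (ha : 0 ≤ a) (hab : a ≤ b) (hpa : 0 < a ^ (2*n) + x) :
    |∫ y in a..b, Real.cos (ph n x y)| ≤ 3 / (a ^ (2*n) + x) := by
  set p : ℝ → ℝ := fun y => y ^ (2*n) + x with hp_def
  have hp_mono : ∀ ⦃y z : ℝ⦄, a ≤ y → y ≤ z → p y ≤ p z := by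
    intro y z hy hyz
    have := pow_le_pow_left₀ (le_trans ha hy) hyz (2*n)
    simpa [hp_def] using this
  have hp_pos : ∀ y ∈ Icc a b, 0 < p y := fun y hy =>
    lt_of_lt_of_le hpa (hp_mono le_rfl hy.1)
  set ψ : ℝ → ℝ := fun y => (2*n : ℝ) * y ^ (2*n-1) with hψ_def
  have hp_deriv : ∀ y : ℝ, HasDerivAt p (ψ y) y := by
    intro y
    simpa [hψ_def, hp_def] using ((hasDerivAt_pow (2*n) y).add_const x)
  -- g = sin (ph) / p
  set g : ℝ → ℝ := fun y => Real.sin (ph n x y) / p y with hg_def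
  have hg_deriv : ∀ y ∈ Icc a b, HasDerivAt g
      ((Real.cos (ph n x y) * p y * p y - Real.sin (ph n x y) * ψ y) / (p y) ^ 2) y := by
    intro y hy
    have h1 : HasDerivAt (fun y => Real.sin (ph n x y)) (Real.cos (ph n x y) * (p y)) y :=
      (Real.hasDerivAt_sin (ph n x y)).comp y (hasDerivAt_ph n x y)
    have := h1.div (hp_deriv y) (ne_of_gt (hp_pos y hy))
    refine this.congr_deriv ?_
    try ring
  have hψ_nonneg : ∀ y ∈ Icc a b, 0 ≤ ψ y := by
    intro y hy
    have : (0:ℝ) ≤ y ^ (2*n-1) := pow_nonneg (le_trans ha hy.1) _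
    positivity
  -- continuity facts
  have hcont_p : ContinuousOn p (Icc a b) := by fun_prop
  have hp_ne : ∀ y ∈ Icc a b, p y ≠ 0 := fun y hy => ne_of_gt (hp_pos y hy)
  have hcont_q : ContinuousOn (fun y => ψ y / (p y) ^ 2) (Icc a b) := by
    apply ContinuousOn.div (by fun_prop) (by fun_prop)
    intro y hy
    exact pow_ne_zero 2 (hp_ne y hy)
  have hcont_sq : ContinuousOn (fun y => Real.sin (ph n x y) * ψ y / (p y) ^ 2) (Icc a b) := by
    apply ContinuousOn.div ?_ (by fun_prop) (fun y hy => pow_ne_zero 2 (hp_ne y hy))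
    have : Continuous (fun y => Real.sin (ph n x y) * ψ y) := by
      unfold ψ
      unfold ph
      fun_prop
    exact this.continuousOn
  have hI_q : IntervalIntegrable (fun y => ψ y / (p y) ^ 2) volume a b := by
    rw [intervalIntegrable_iff_integrableOn_Icc_of_le hab] at *
    exact hcont_q.integrableOn_compact isCompact_Icc
  have hI_sq : IntervalIntegrable (fun y => Real.sin (ph n x y) * ψ y / (p y) ^ 2) volume a b := by
    rw [intervalIntegrable_iff_integrableOn_Icc_of_le hab]
    exact hcont_sq.integrableOn_compact isCompact_Icc
  have hI_cos : IntervalIntegrable (fun y => Real.cos (ph n x y)) volume a b := by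
    apply Continuous.intervalIntegrable
    unfold ph; fun_prop
  -- FTC for g
  have h1 : ∀ y ∈ uIcc a b, HasDerivAt g
      (Real.cos (ph n x y) - Real.sin (ph n x y) * ψ y / (p y) ^ 2) y := by
    intro y hy
    rw [uIcc_of_le hab] at hy
    have hd := hg_deriv y hy
    convert hd using 1
    have hp0 : p y ≠ 0 := hp_ne y hy
    field_simp
  have hI_diff : IntervalIntegrable
      (fun y => Real.cos (ph n x y) - Real.sin (ph n x y) * ψ y / (p y) ^ 2) volume a b :=
    hI_cos.sub hI_sq
  have E1 : (∫ y in a..b, (Real.cos (ph n x y) - Real.sin (ph n x y) * ψ y / (p y) ^ 2))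
      = g b - g a := intervalIntegral.integral_eq_sub_of_hasDerivAt h1 hI_diff
  have E1' : (∫ y in a..b, Real.cos (ph n x y))
      = (g b - g a) + ∫ y in a..b, Real.sin (ph n x y) * ψ y / (p y) ^ 2 := by
    rw [intervalIntegral.integral_sub hI_cos hI_sq] at E1
    linarith
  -- FTC for -(p)⁻¹
  have h2 : ∀ y ∈ uIcc a b, HasDerivAt (fun y => -(p y)⁻¹) (ψ y / (p y) ^ 2) y := by
    intro y hy
    rw [uIcc_of_le hab] at hy
    have := ((hp_deriv y).inv (hp_ne y hy)).neg
    refine this.congr_deriv ?_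
    field_simp
  have E2 : (∫ y in a..b, ψ y / (p y) ^ 2) = (p a)⁻¹ - (p b)⁻¹ := by
    rw [intervalIntegral.integral_eq_sub_of_hasDerivAt h2 hI_q]
    ring
  -- bound on oscillatory remainder
  have E3 : |∫ y in a..b, Real.sin (ph n x y) * ψ y / (p y) ^ 2| ≤ (p a)⁻¹ - (p b)⁻¹ := by
    have hb1 : ∀ᵐ y ∂(volume.restrict (uIoc a b)),
        ‖Real.sin (ph n x y) * ψ y / (p y) ^ 2‖ ≤ ψ y / (p y) ^ 2 := by
      rw [uIoc_of_le hab]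
      filter_upwards [ae_restrict_mem measurableSet_Ioc] with y hy
      have hy' : y ∈ Icc a b := Ioc_subset_Icc_self hy
      have hψ := hψ_nonneg y hy'
      have hp2 : (0:ℝ) < (p y) ^ 2 := pow_pos (hp_pos y hy') 2
      rw [Real.norm_eq_abs, abs_div, abs_of_pos hp2, abs_mul, abs_of_nonneg hψ]
      have hle : |Real.sin (ph n x y)| * ψ y ≤ ψ y := by
        nlinarith [Real.abs_sin_le_one (ph n x y), abs_nonneg (Real.sin (ph n x y))]
      exact (div_le_div_iff_of_pos_right hp2).mpr hle
    have := intervalIntegral.norm_integral_le_of_norm_le hab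
      ((ae_restrict_iff' measurableSet_Ioc).1 (by rwa [uIoc_of_le hab] at hb1)) hI_q
    rw [Real.norm_eq_abs] at this
    rw [E2] at this
    refine this.trans ?_
    have hpb : p a ≤ p b := hp_mono le_rfl hab
    have := inv_anti₀ hpa hpb
    linarith
  -- combine
  have hgbound : ∀ y ∈ Icc a b, |g y| ≤ (p y)⁻¹ := by
    intro y hy
    have hpy := hp_pos y hy
    show |Real.sin (ph n x y) / p y| ≤ (p y)⁻¹
    rw [abs_div, abs_of_pos hpy, ← one_div]
    exact (div_le_div_iff_of_pos_right hpy).mpr (Real.abs_sin_le_one _)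
  have hga := hgbound a (left_mem_Icc.2 hab)
  have hgb := hgbound b (right_mem_Icc.2 hab)
  have hpab : (p b)⁻¹ ≤ (p a)⁻¹ := by
    apply inv_anti₀ hpa (hp_mono le_rfl hab)
  have hpa_inv : (0:ℝ) < (p a)⁻¹ := inv_pos.2 hpa
  have habs : |(g b - g a) + ∫ y in a..b, Real.sin (ph n x y) * ψ y / (p y) ^ 2|
      ≤ |g b| + |g a| + |∫ y in a..b, Real.sin (ph n x y) * ψ y / (p y) ^ 2| := by
    have h2 : |g b - g a| ≤ |g b| + |g a| := by
      calc |g b - g a| = |g b + -g a| := by rw [sub_eq_add_neg]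
        _ ≤ |g b| + |-g a| := abs_add_le _ _
        _ = |g b| + |g a| := by rw [abs_neg]
    have h1 := abs_add_le (g b - g a) (∫ y in a..b, Real.sin (ph n x y) * ψ y / (p y) ^ 2)
    linarith
  rw [E1']
  have hfinal : |g b| + |g a| + |∫ y in a..b, Real.sin (ph n x y) * ψ y / (p y) ^ 2|
      ≤ 3 / (p a) := by
    rw [div_eq_mul_inv]
    linarith
  exact le_trans habs hfinal


lemma intervalIntegrable_cos_ph (n : ℕ) (x a b : ℝ) :
    IntervalIntegrable (fun y => Real.cos (ph n x y)) volume a b := by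
  apply Continuous.intervalIntegrable
  unfold ph; fun_prop

lemma p_ge (n : ℕ) (hn : 1 ≤ n) (x N : ℝ) (hN : 1 + |x| ≤ N) : N ≤ N ^ (2*n) + x := by
  have hx : 0 ≤ |x| := abs_nonneg x
  have hN1 : 1 ≤ N := by linarith
  have h2 : N ^ 2 ≤ N ^ (2*n) := pow_le_pow_right₀ hN1 (by omega)
  have hxx : -|x| ≤ x := neg_abs_le x
  nlinarith [sq_nonneg N]

/-- partial integrals -/
noncomputable def F (n : ℕ) (x R : ℝ) : ℝ := ∫ y in (0:ℝ)..R, Real.cos (ph n x y)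

lemma F_sub (n : ℕ) (x c b : ℝ) : F n x b - F n x c = ∫ y in c..b, Real.cos (ph n x y) :=
  intervalIntegral.integral_interval_sub_left (intervalIntegrable_cos_ph n x 0 b)
    (intervalIntegrable_cos_ph n x 0 c)

lemma F_diff_bound (n : ℕ) (hn : 1 ≤ n) (x c b : ℝ) (hc : 1 + |x| ≤ c) (hcb : c ≤ b) :
    |F n x b - F n x c| ≤ 3 / c := by
  have hc0 : (0:ℝ) < c := lt_of_lt_of_le (by positivity) hc
  have hp := p_ge n hn x c hc
  have hpc : 0 < c ^ (2*n) + x := lt_of_lt_of_le hc0 hp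
  rw [F_sub]
  refine (ibp_bound n x c b hc0.le hcb hpc).trans ?_
  exact div_le_div_of_nonneg_left (by norm_num) hc0 hp

lemma tendsto_F (n : ℕ) (hn : 1 ≤ n) (x : ℝ) :
    ∃ l : ℝ, Filter.Tendsto (F n x) Filter.atTop (nhds l) := by
  have hcauchy : CauchySeq (F n x) := by
    rw [Metric.cauchySeq_iff']
    intro ε hε
    refine ⟨max (1 + |x|) (6 / ε), fun b hb => ?_⟩
    set N := max (1 + |x|) (6 / ε) with hN_def
    have h1 : 1 + |x| ≤ N := le_max_left _ _
    have h2 : 6 / ε ≤ N := le_max_right _ _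
    have hN0 : 0 < N := lt_of_lt_of_le (by positivity) h1
    rw [Real.dist_eq]
    have := F_diff_bound n hn x N b h1 hb
    have h3 : 3 / N ≤ 3 / (6 / ε) := by
      exact div_le_div_of_nonneg_left (by norm_num) (by positivity) h2
    have h4 : 3 / (6 / ε) = ε / 2 := by field_simp; ring
    have h5 : ε / 2 < ε := by linarith
    linarith
  exact cauchySeq_tendsto_of_complete hcauchy

lemma tendsto_Ain (n : ℕ) (hn : 1 ≤ n) (x : ℝ) :
    Filter.Tendsto (fun R : ℝ => (1 / Real.pi) * F n x R) Filter.atTop (nhds (Ain n x)) := by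
  obtain ⟨l, hl⟩ := tendsto_F n hn x
  have h : Filter.Tendsto (fun R : ℝ => (1 / Real.pi) * F n x R) Filter.atTop
      (nhds ((1 / Real.pi) * l)) := hl.const_mul _
  have hAin : Ain n x = (1 / Real.pi) * l := by
    unfold Ain
    exact h.limUnder_eq
  rw [hAin]
  exact h


lemma one_div_pi_le_one : 1 / Real.pi ≤ 1 := by
  rw [div_le_one Real.pi_pos]
  linarith [Real.pi_gt_three]

lemma Ain_bound_global (n : ℕ) (hn : 1 ≤ n) (x : ℝ) : |Ain n x| ≤ |x| + 4 := by
  set a₀ : ℝ := 1 + |x| with ha0_def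
  have ha0 : (0:ℝ) ≤ a₀ := by positivity
  have ha1 : (1:ℝ) ≤ a₀ := by have := abs_nonneg x; rw [ha0_def]; linarith
  have hev : ∀ b ≥ a₀, |(1 / Real.pi) * F n x b| ≤ |x| + 4 := by
    intro b hb
    have h1 : |F n x a₀| ≤ a₀ := by
      have := intervalIntegral.norm_integral_le_of_norm_le_const
        (C := 1) (f := fun y => Real.cos (ph n x y)) (a := (0:ℝ)) (b := a₀)
        (fun y _ => by simpa using Real.abs_cos_le_one (ph n x y))
      simpa [F, abs_of_nonneg ha0] using this
    have h2 : |F n x b - F n x a₀| ≤ 3 := by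
      refine (F_diff_bound n hn x a₀ b le_rfl hb).trans ?_
      rw [div_le_iff₀ (by positivity)]
      nlinarith
    have h3 : |F n x b| ≤ a₀ + 3 := by
      have := abs_add_le (F n x a₀) (F n x b - F n x a₀)
      simp only [add_sub_cancel] at this
      linarith
    rw [abs_mul]
    calc |1 / Real.pi| * |F n x b| ≤ 1 * (a₀ + 3) := by
          apply mul_le_mul _ h3 (abs_nonneg _) zero_le_one
          rw [abs_of_pos (by positivity)]
          exact one_div_pi_le_one
      _ = |x| + 4 := by rw [one_mul, ha0_def]; ring
  have htend : Filter.Tendsto (fun b => |(1 / Real.pi) * F n x b|) Filter.atTop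
      (nhds |Ain n x|) := (tendsto_Ain n hn x).abs
  exact le_of_tendsto htend (Filter.eventually_atTop.2 ⟨a₀, hev⟩)

lemma Ain_decay (n : ℕ) (hn : 1 ≤ n) (x : ℝ) (hx : 0 < x) : |Ain n x| ≤ 3 / x := by
  have hev : ∀ b ≥ (0:ℝ), |(1 / Real.pi) * F n x b| ≤ 3 / x := by
    intro b hb
    have h0 : (0:ℝ) ^ (2*n) + x = x := by
      rw [zero_pow (by omega)]; ring
    have h1 : |F n x b| ≤ 3 / x := by
      have := ibp_bound n x 0 b le_rfl hb (by rw [h0]; exact hx)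
      rw [h0] at this
      simpa [F, ph] using this
    rw [abs_mul]
    calc |1 / Real.pi| * |F n x b| ≤ 1 * (3 / x) := by
          apply mul_le_mul _ h1 (abs_nonneg _) zero_le_one
          rw [abs_of_pos (by positivity)]
          exact one_div_pi_le_one
      _ = 3 / x := one_mul _
  have htend : Filter.Tendsto (fun b => |(1 / Real.pi) * F n x b|) Filter.atTop
      (nhds |Ain n x|) := (tendsto_Ain n hn x).abs
  exact le_of_tendsto htend (Filter.eventually_atTop.2 ⟨0, hev⟩)

lemma Ain_measurable (n : ℕ) (hn : 1 ≤ n) : Measurable (Ain n) := by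
  have hmeas : ∀ k : ℕ, Measurable (fun x => (1 / Real.pi) * F n x (k:ℝ)) := by
    intro k
    have hc : Continuous (fun p : ℝ × ℝ => Real.cos (ph n p.1 p.2)) := by
      unfold ph; fun_prop
    have hsm := hc.stronglyMeasurable.integral_prod_right'
      (ν := volume.restrict (Ioc (0:ℝ) (k:ℝ)))
    have heq : (fun x => ∫ y in Ioc (0:ℝ) (k:ℝ), Real.cos (ph n x y)) = fun x => F n x (k:ℝ) := by
      funext x
      rw [F, intervalIntegral.integral_of_le (by positivity)]
    exact (measurable_const.mul ((heq ▸ hsm.measurable) : Measurable fun x => F n x (k:ℝ)))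
  have htend : Filter.Tendsto (fun (k:ℕ) (x:ℝ) => (1 / Real.pi) * F n x (k:ℝ)) Filter.atTop
      (nhds (Ain n)) := by
    rw [tendsto_pi_nhds]
    intro x
    exact (tendsto_Ain n hn x).comp tendsto_natCast_atTop_atTop
  exact measurable_of_tendsto_metrizable hmeas htend


/-- the product kernel on the diagonal shift -/
noncomputable def Af (n : ℕ) (t x y u : ℝ) : ℝ := Ain n (x+u+t) * Ain n (u+y+t)

lemma Af_meas (n : ℕ) (hn : 1 ≤ n) (t x y : ℝ) : Measurable (Af n t x y) := by
  exact ((Ain_measurable n hn).comp (by fun_prop)).mul ((Ain_measurable n hn).comp (by fun_prop))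

lemma Af_bound_global (n : ℕ) (hn : 1 ≤ n) (t x y u : ℝ) :
    |Af n t x y u| ≤ (|x+u+t|+4) * (|u+y+t|+4) := by
  rw [Af, abs_mul]
  apply mul_le_mul (Ain_bound_global n hn _) (Ain_bound_global n hn _) (abs_nonneg _)
  positivity

lemma Af_bound_decay (n : ℕ) (hn : 1 ≤ n) (t x y u : ℝ)
    (hu : 1 - min (x+t) (y+t) ≤ u) :
    |Af n t x y u| ≤ 9 * ((u + min (x+t) (y+t))^2)⁻¹ := by
  set m := min (x+t) (y+t) with hm
  have h1 : (1:ℝ) ≤ u + m := by linarith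
  have ha1 : u + m ≤ x+u+t := by have := min_le_left (x+t) (y+t); rw [hm]; linarith
  have ha2 : u + m ≤ u+y+t := by have := min_le_right (x+t) (y+t); rw [hm]; linarith
  have hpos1 : (0:ℝ) < x+u+t := by linarith
  have hpos2 : (0:ℝ) < u+y+t := by linarith
  have hum : (0:ℝ) < u + m := by linarith
  have d1 : |Ain n (x+u+t)| ≤ 3/(u+m) :=
    (Ain_decay n hn _ hpos1).trans (div_le_div_of_nonneg_left (by norm_num) hum ha1)
  have d2 : |Ain n (u+y+t)| ≤ 3/(u+m) :=
    (Ain_decay n hn _ hpos2).trans (div_le_div_of_nonneg_left (by norm_num) hum ha2)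
  rw [Af, abs_mul]
  calc |Ain n (x+u+t)| * |Ain n (u+y+t)| ≤ (3/(u+m)) * (3/(u+m)) :=
        mul_le_mul d1 d2 (abs_nonneg _) (by positivity)
    _ = 9 * ((u + m)^2)⁻¹ := by
        field_simp
        ring

lemma decay_facts (t x y r : ℝ) (hr : 1 - min (x+t) (y+t) ≤ r) :
    IntegrableOn (fun u => 9 * ((u + min (x+t) (y+t))^2)⁻¹) (Ioi r) ∧
    (∫ u in Ioi r, 9 * ((u + min (x+t) (y+t))^2)⁻¹) = 9 * (r + min (x+t) (y+t))⁻¹ := by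
  set m := min (x+t) (y+t) with hm
  have hrm : (1:ℝ) ≤ r + m := by linarith
  have hne : ∀ u ∈ Ici r, u + m ≠ 0 := by
    intro u hu
    have : (1:ℝ) ≤ u + m := by have := hu.out; linarith
    linarith
  have hderiv : ∀ u ∈ Ici r, HasDerivAt (fun u => -9 * (u+m)⁻¹) (9 * ((u+m)^2)⁻¹) u := by
    intro u hu
    have h := (((hasDerivAt_id u).add_const m).inv (hne u hu)).const_mul (-9 : ℝ)
    refine h.congr_deriv ?_
    field_simp
    rfl
  have hpos : ∀ u ∈ Ioi r, 0 ≤ 9 * ((u+m)^2)⁻¹ := by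
    intro u hu
    positivity
  have htend : Filter.Tendsto (fun u => -9 * (u+m)⁻¹) Filter.atTop (nhds 0) := by
    have h1 : Filter.Tendsto (fun u : ℝ => u + m) Filter.atTop Filter.atTop :=
      Filter.tendsto_atTop_add_const_right _ m Filter.tendsto_id
    have := (tendsto_inv_atTop_zero.comp h1).const_mul (-9 : ℝ)
    simpa using this
  refine ⟨integrableOn_Ioi_deriv_of_nonneg' hderiv hpos htend, ?_⟩
  rw [integral_Ioi_of_hasDerivAt_of_nonneg' hderiv hpos htend]
  ring

/-- bound for the absolute inner integral -/
noncomputable def gb (t x y z : ℝ) : ℝ :=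
  (|1 - min (x+t) (y+t)| + |z|) *
    (2*|z| + |1 - min (x+t) (y+t)| + (max |x+t| |y+t| + 4))^2 + 9

lemma Af_Ioi_facts (n : ℕ) (hn : 1 ≤ n) (t x y z : ℝ) :
    IntegrableOn (Af n t x y) (Ioi z) ∧
    (∫ u in Ioi z, |Af n t x y u|) ≤ gb t x y z := by
  set m := min (x+t) (y+t) with hm
  set u1 := 1 - m with hu1
  set r := max z u1 with hr
  set c0 := max |x+t| |y+t| + 4 with hc0
  have hzr : z ≤ r := le_max_left _ _
  have hu1r : u1 ≤ r := le_max_right _ _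
  have hmeas := Af_meas n hn t x y
  set B : ℝ → ℝ := fun u => (|x+u+t|+4) * (|u+y+t|+4) with hB
  have hBcont : Continuous B := by fun_prop
  have part1 : IntegrableOn (Af n t x y) (Ioc z r) := by
    apply Integrable.mono' (hBcont.integrableOn_Ioc) hmeas.aestronglyMeasurable
    exact Filter.Eventually.of_forall fun u => by
      simpa using Af_bound_global n hn t x y u
  have hdecay := decay_facts t x y r hu1r
  have part2 : IntegrableOn (Af n t x y) (Ioi r) := by
    apply Integrable.mono' hdecay.1 hmeas.aestronglyMeasurable
    filter_upwards [ae_restrict_mem measurableSet_Ioi] with u hu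
    have : u1 ≤ u := le_of_lt (lt_of_le_of_lt hu1r hu)
    simpa using Af_bound_decay n hn t x y u this
  have hunion : Ioc z r ∪ Ioi r = Ioi z := Ioc_union_Ioi_eq_Ioi hzr
  have hint : IntegrableOn (Af n t x y) (Ioi z) := by
    rw [← hunion]
    exact part1.union part2
  refine ⟨hint, ?_⟩
  have habs1 : IntegrableOn (fun u => |Af n t x y u|) (Ioc z r) := part1.abs
  have habs2 : IntegrableOn (fun u => |Af n t x y u|) (Ioi r) := part2.abs
  have hsplit : (∫ u in Ioi z, |Af n t x y u|)
      = (∫ u in Ioc z r, |Af n t x y u|) + ∫ u in Ioi r, |Af n t x y u| := by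
    rw [← hunion, setIntegral_union (Ioc_disjoint_Ioi le_rfl) measurableSet_Ioi habs1 habs2]
  set M : ℝ := (2*|z| + |u1| + c0)^2 with hM
  have hM0 : 0 ≤ M := by positivity
  have b1 : (∫ u in Ioc z r, |Af n t x y u|) ≤ (|u1| + |z|) * M := by
    have hpt : ∀ u ∈ Ioc z r, |Af n t x y u| ≤ M := by
      intro u hu
      have hur : |u| ≤ 2*|z| + |u1| := by
        have h1 : u ≤ r := hu.2
        have h2 : r ≤ |z| + |u1| := by
          apply max_le (le_trans (le_abs_self z) (by linarith [abs_nonneg u1]))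
            (le_trans (le_abs_self u1) (by linarith [abs_nonneg z]))
        have h3 : z < u := hu.1
        have h4 : -(|z|) ≤ z := neg_abs_le z
        rw [abs_le]
        constructor <;> [skip; skip] <;> nlinarith [abs_nonneg z, abs_nonneg u1]
      have hb1 : |x+u+t| + 4 ≤ |u| + c0 := by
        have : |x+u+t| ≤ |u| + |x+t| := by
          have : x+u+t = u + (x+t) := by ring
          rw [this]
          exact abs_add_le _ _
        have h5 : |x+t| ≤ max |x+t| |y+t| := le_max_left _ _
        rw [hc0]
        linarith
      have hb2 : |u+y+t| + 4 ≤ |u| + c0 := by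
        have : |u+y+t| ≤ |u| + |y+t| := by
          have : u+y+t = u + (y+t) := by ring
          rw [this]
          exact abs_add_le _ _
        have h5 : |y+t| ≤ max |x+t| |y+t| := le_max_right _ _
        rw [hc0]
        linarith
      calc |Af n t x y u| ≤ B u := Af_bound_global n hn t x y u
        _ ≤ (|u| + c0) * (|u| + c0) :=
            mul_le_mul hb1 hb2 (by positivity) (by positivity)
        _ ≤ M := by
            rw [hM, sq]
            apply mul_le_mul (by linarith) (by linarith) (by positivity) (by positivity)
    calc (∫ u in Ioc z r, |Af n t x y u|) ≤ ∫ _ in Ioc z r, M :=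
          setIntegral_mono_on habs1 (integrableOn_const measure_Ioc_lt_top.ne)
            measurableSet_Ioc hpt
      _ = (r - z) * M := by
          rw [setIntegral_const, Real.volume_real_Ioc_of_le hzr, smul_eq_mul]
      _ ≤ (|u1| + |z|) * M := by
          apply mul_le_mul_of_nonneg_right _ hM0
          have h2 : r ≤ z + (|u1| + |z|) := by
            apply max_le (by linarith [abs_nonneg u1, abs_nonneg z])
            linarith [le_abs_self u1, neg_abs_le z]
          linarith
  have b2 : (∫ u in Ioi r, |Af n t x y u|) ≤ 9 := by
    have hpt : ∀ u ∈ Ioi r, |Af n t x y u| ≤ 9 * ((u + m)^2)⁻¹ := by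
      intro u hu
      exact Af_bound_decay n hn t x y u (le_of_lt (lt_of_le_of_lt hu1r hu))
    calc (∫ u in Ioi r, |Af n t x y u|)
        ≤ ∫ u in Ioi r, 9 * ((u + m)^2)⁻¹ :=
          setIntegral_mono_on habs2 hdecay.1 measurableSet_Ioi hpt
      _ = 9 * (r + m)⁻¹ := hdecay.2
      _ ≤ 9 := by
          have h1 : (1:ℝ) ≤ r + m := by rw [hr]; have := le_max_right z u1; rw [hu1] at *; linarith
          have h2 := inv_le_one_of_one_le₀ h1
          nlinarith [inv_pos.2 (lt_of_lt_of_le one_pos h1)]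
  rw [hsplit, gb, ← hm, ← hc0]
  rw [hM, hu1] at b1
  linarith


lemma shift_preimage (z : ℝ) : (fun s : ℝ => z + s) ⁻¹' (Ioi z) = Ioi 0 := by
  ext s
  simp

lemma shift_integrableOn (n : ℕ) (hn : 1 ≤ n) (t x y z : ℝ) :
    IntegrableOn (fun s => Af n t x y (z + s)) (Ioi 0) := by
  have hemb : MeasurableEmbedding (fun s : ℝ => z + s) :=
    (Homeomorph.addLeft z).measurableEmbedding
  have hmp : MeasurePreserving (fun s : ℝ => z + s) volume volume :=
    measurePreserving_add_left volume z
  have h := (hmp.integrableOn_comp_preimage hemb).2 (Af_Ioi_facts n hn t x y z).1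
  rw [shift_preimage] at h
  exact h

lemma shift_integral (n : ℕ) (t x y z : ℝ) :
    (∫ s in Ioi (0:ℝ), Af n t x y (z + s)) = ∫ u in Ioi z, Af n t x y u := by
  have hemb : MeasurableEmbedding (fun s : ℝ => z + s) :=
    (Homeomorph.addLeft z).measurableEmbedding
  have hmp : MeasurePreserving (fun s : ℝ => z + s) volume volume :=
    measurePreserving_add_left volume z
  have h := hmp.setIntegral_preimage_emb hemb (Af n t x y) (Ioi z)
  rw [shift_preimage] at h
  exact h

section Weight

variable {w : ℝ → ℝ}

lemma W_icc (hw_diff : Differentiable ℝ w) (hw_pos : ∀ x, 0 < deriv w x) (a b : ℝ) :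
    IntegrableOn (deriv w) (Icc a b) := by
  have h := integrableOn_deriv_of_nonneg (g := w) (g' := deriv w) (a := a-1) (b := b+1)
    hw_diff.continuous.continuousOn (fun x _ => (hw_diff x).hasDerivAt)
    (fun x _ => (hw_pos x).le)
  exact h.mono_set (fun u hu => ⟨by linarith [hu.1], by linarith [hu.2]⟩)

lemma exp_Iio (c a : ℝ) (hc : 0 < c) :
    IntegrableOn (fun z : ℝ => Real.exp (c * z)) (Iio a) := by
  have h := exp_neg_integrableOn_Ioi (-a) hc
  have hemb : MeasurableEmbedding (fun z : ℝ => -z) := (Homeomorph.neg ℝ).measurableEmbedding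
  have hmp : MeasurePreserving (fun z : ℝ => -z) volume volume :=
    Measure.measurePreserving_neg volume
  have h2 := (hmp.integrableOn_comp_preimage hemb).2 h
  have hpre : (fun z : ℝ => -z) ⁻¹' (Ioi (-a)) = Iio a := by
    ext z
    simp
  rw [hpre] at h2
  have heq : ((fun x => Real.exp (-c * x)) ∘ (fun z : ℝ => -z)) = fun z => Real.exp (c * z) := by
    funext z
    simp [Function.comp]
  rwa [heq] at h2

lemma W_integrable (hw_diff : Differentiable ℝ w) (hw_pos : ∀ x, 0 < deriv w x)
    {ω x₀ : ℝ} (hω : 0 < ω) (hx₀ : 0 < x₀)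
    (hbound : ∀ x : ℝ, x₀ ≤ |x| → deriv w x ≤ Real.exp (-ω * |x|)) :
    Integrable (deriv w) := by
  have hmeas : AEStronglyMeasurable (deriv w) (volume : Measure ℝ) :=
    (measurable_deriv w).aestronglyMeasurable
  have t1 : IntegrableOn (deriv w) (Ioi x₀) := by
    apply Integrable.mono' (exp_neg_integrableOn_Ioi x₀ hω) hmeas.restrict
    filter_upwards [ae_restrict_mem measurableSet_Ioi] with z hz
    have hz0 : 0 < z := lt_trans hx₀ hz
    have h1 := hbound z (by rw [abs_of_pos hz0]; exact le_of_lt hz)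
    rw [abs_of_pos hz0] at h1
    rw [Real.norm_eq_abs, abs_of_pos (hw_pos z)]
    exact h1
  have t2 : IntegrableOn (deriv w) (Iio (-x₀)) := by
    apply Integrable.mono' (exp_Iio ω (-x₀) hω) hmeas.restrict
    filter_upwards [ae_restrict_mem measurableSet_Iio] with z hz
    have hz0 : z < 0 := lt_trans hz (by linarith)
    have h1 := hbound z (by rw [abs_of_neg hz0]; have := hz.out; linarith)
    rw [abs_of_neg hz0] at h1
    rw [Real.norm_eq_abs, abs_of_pos (hw_pos z)]
    calc deriv w z ≤ Real.exp (-ω * -z) := h1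
      _ = Real.exp (ω * z) := by ring_nf
  have t3 := W_icc hw_diff hw_pos (-x₀) x₀
  rw [← integrableOn_univ]
  apply ((t2.union t3).union t1).mono_set
  intro z _
  simp only [mem_union, mem_Iio, mem_Icc, mem_Ioi]
  by_cases h1 : z < -x₀
  · tauto
  · by_cases h2 : z ≤ x₀
    · left; right; constructor <;> linarith
    · right; linarith

lemma w_repr (hw_diff : Differentiable ℝ w) (hw_pos : ∀ x, 0 < deriv w x)
    (hw_bot : Filter.Tendsto w Filter.atBot (nhds 0))
    {ω x₀ : ℝ} (hω : 0 < ω) (hx₀ : 0 < x₀)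
    (hbound : ∀ x : ℝ, x₀ ≤ |x| → deriv w x ≤ Real.exp (-ω * |x|)) (u : ℝ) :
    (∫ z in Iio u, deriv w z) = w u := by
  rw [← integral_Iic_eq_integral_Iio]
  have h := integral_Iic_of_hasDerivAt_of_tendsto' (f := w) (f' := deriv w) (a := u)
    (fun z _ => (hw_diff z).hasDerivAt)
    ((W_integrable hw_diff hw_pos hω hx₀ hbound).integrableOn) hw_bot
  rw [h]
  ring

lemma cube_exp_bound {ω : ℝ} (hω : 0 < ω) (v : ℝ) (hv : 0 ≤ v) :
    (v+1)^3 * Real.exp (-ω * v) ≤ (max 1 (6/ω))^3 * Real.exp (-(ω/2) * v) := by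
  set M := max 1 (6/ω) with hM
  have hM1 : (1:ℝ) ≤ M := le_max_left _ _
  have hM6 : 6/ω ≤ M := le_max_right _ _
  have hMω : 1 ≤ M * (ω/6) := by
    rw [hM]
    calc (1:ℝ) = (6/ω) * (ω/6) := by field_simp
      _ ≤ max 1 (6/ω) * (ω/6) := by
          apply mul_le_mul_of_nonneg_right (le_max_right _ _) (by positivity)
  have h1 : v + 1 ≤ M * ((ω/6)*v + 1) := by nlinarith
  have h2 : (ω/6)*v + 1 ≤ Real.exp ((ω/6)*v) := by
    have := Real.add_one_le_exp ((ω/6)*v)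
    linarith
  have h3 : v + 1 ≤ M * Real.exp ((ω/6)*v) := by nlinarith [Real.exp_pos ((ω/6)*v)]
  have h4 : (v+1)^3 ≤ (M * Real.exp ((ω/6)*v))^3 := by
    apply pow_le_pow_left₀ (by linarith) h3
  have h5 : (M * Real.exp ((ω/6)*v))^3 = M^3 * Real.exp ((ω/2)*v) := by
    rw [mul_pow]
    congr 1
    rw [← Real.exp_nat_mul]
    congr 1
    push_cast
    ring
  have h6 : Real.exp ((ω/2)*v) * Real.exp (-ω*v) = Real.exp (-(ω/2)*v) := by
    rw [← Real.exp_add]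
    ring_nf
  have hexp : (0:ℝ) < Real.exp (-ω*v) := Real.exp_pos _
  calc (v+1)^3 * Real.exp (-ω * v) ≤ (M^3 * Real.exp ((ω/2)*v)) * Real.exp (-ω*v) := by
        rw [← h5]
        exact mul_le_mul_of_nonneg_right h4 hexp.le
    _ = M^3 * Real.exp (-(ω/2)*v) := by rw [mul_assoc, h6]

lemma cube_W_integrable (hw_diff : Differentiable ℝ w) (hw_pos : ∀ x, 0 < deriv w x)
    {ω x₀ : ℝ} (hω : 0 < ω) (hx₀ : 0 < x₀)
    (hbound : ∀ x : ℝ, x₀ ≤ |x| → deriv w x ≤ Real.exp (-ω * |x|)) :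
    Integrable (fun z => (|z|+1)^3 * deriv w z) := by
  set M := max 1 (6/ω) with hM
  have hmeas : AEStronglyMeasurable (fun z => (|z|+1)^3 * deriv w z) (volume : Measure ℝ) := by
    apply Measurable.aestronglyMeasurable
    exact (((measurable_abs).add measurable_const).pow measurable_const).mul (measurable_deriv w)
  have t1 : IntegrableOn (fun z => (|z|+1)^3 * deriv w z) (Ioi x₀) := by
    apply Integrable.mono' ((exp_neg_integrableOn_Ioi x₀ (by positivity : 0 < ω/2)).const_mul
      (M^3)) hmeas.restrict
    filter_upwards [ae_restrict_mem measurableSet_Ioi] with z hz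
    have hz0 : 0 < z := lt_trans hx₀ hz
    have h1 := hbound z (by rw [abs_of_pos hz0]; exact le_of_lt hz)
    rw [abs_of_pos hz0] at h1
    rw [Real.norm_eq_abs,
      abs_of_nonneg (mul_nonneg (by positivity) (hw_pos z).le)]
    rw [abs_of_pos hz0]
    calc (z+1)^3 * deriv w z ≤ (z+1)^3 * Real.exp (-ω*z) :=
          mul_le_mul_of_nonneg_left h1 (by positivity)
      _ ≤ M^3 * Real.exp (-(ω/2)*z) := cube_exp_bound hω z hz0.le
  have t2 : IntegrableOn (fun z => (|z|+1)^3 * deriv w z) (Iio (-x₀)) := by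
    apply Integrable.mono' ((exp_Iio (ω/2) (-x₀) (by positivity)).const_mul (M^3)) hmeas.restrict
    filter_upwards [ae_restrict_mem measurableSet_Iio] with z hz
    have hz0 : z < 0 := lt_trans hz.out (by linarith)
    have h1 := hbound z (by rw [abs_of_neg hz0]; have := hz.out; linarith)
    rw [abs_of_neg hz0] at h1
    rw [Real.norm_eq_abs,
      abs_of_nonneg (mul_nonneg (by positivity) (hw_pos z).le)]
    rw [abs_of_neg hz0]
    have h2 : Real.exp (-ω * -z) = Real.exp (-ω * (-z)) := by ring_nf
    have key := cube_exp_bound hω (-z) (by linarith)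
    calc (-z+1)^3 * deriv w z ≤ (-z+1)^3 * Real.exp (-ω * (-z)) := by
          apply mul_le_mul_of_nonneg_left _ (pow_nonneg (by linarith) 3)
          rw [← h2]
          exact h1
      _ ≤ M^3 * Real.exp (-(ω/2) * (-z)) := key
      _ = M^3 * Real.exp ((ω/2) * z) := by ring_nf
  have t3 : IntegrableOn (fun z => (|z|+1)^3 * deriv w z) (Icc (-x₀) x₀) := by
    apply Integrable.mono' ((W_icc hw_diff hw_pos (-x₀) x₀).const_mul ((x₀+1)^3)) hmeas.restrict
    filter_upwards [ae_restrict_mem measurableSet_Icc] with z hz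
    rw [Real.norm_eq_abs,
      abs_of_nonneg (mul_nonneg (by positivity) (hw_pos z).le)]
    apply mul_le_mul_of_nonneg_right _ (hw_pos z).le
    have h1 : |z| ≤ x₀ := abs_le.2 ⟨hz.1, hz.2⟩
    apply pow_le_pow_left₀ (by positivity) (by linarith)
  rw [← integrableOn_univ]
  apply ((t2.union t3).union t1).mono_set
  intro z _
  simp only [mem_union, mem_Iio, mem_Icc, mem_Ioi]
  by_cases h1 : z < -x₀
  · tauto
  · by_cases h2 : z ≤ x₀
    · left; right; constructor <;> linarith
    · right; linarith

end Weight


lemma gb_le (t x y : ℝ) : ∃ C : ℝ, 0 ≤ C ∧ ∀ z, gb t x y z ≤ C * (|z|+1)^3 := by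
  set a := |1 - min (x+t) (y+t)| with ha
  set c0 := max |x+t| |y+t| + 4 with hc0
  have ha0 : 0 ≤ a := abs_nonneg _
  have hc00 : 0 ≤ c0 := by
    have := abs_nonneg (x+t)
    have := le_max_left |x+t| |y+t|
    rw [hc0]
    linarith
  refine ⟨(a+1)*(2+a+c0)^2 + 9, by positivity, fun z => ?_⟩
  have hz0 : 0 ≤ |z| := abs_nonneg z
  have h1 : a + |z| ≤ (a+1)*(|z|+1) := by nlinarith
  have h2 : 2*|z| + a + c0 ≤ (2+a+c0)*(|z|+1) := by nlinarith
  have h3 : (2*|z| + a + c0)^2 ≤ (2+a+c0)^2 * (|z|+1)^2 := by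
    rw [← mul_pow]
    apply pow_le_pow_left₀ (by positivity) h2
  have h4 : (a + |z|) * (2*|z| + a + c0)^2
      ≤ ((a+1)*(|z|+1)) * ((2+a+c0)^2 * (|z|+1)^2) :=
    mul_le_mul h1 h3 (by positivity) (by positivity)
  have h5 : ((a+1)*(|z|+1)) * ((2+a+c0)^2 * (|z|+1)^2)
      = (a+1)*(2+a+c0)^2 * (|z|+1)^3 := by ring
  have h6 : (1:ℝ) ≤ (|z|+1)^3 := one_le_pow₀ (by linarith)
  have h7 : ((a+1)*(2+a+c0)^2 + 9) * (|z|+1)^3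
      = (a+1)*(2+a+c0)^2 * (|z|+1)^3 + 9 * (|z|+1)^3 := by ring
  rw [gb, ← ha, ← hc0, h7]
  nlinarith [pow_nonneg (by linarith : (0:ℝ) ≤ |z|+1) 3]

lemma indicator_meas (n : ℕ) (hn : 1 ≤ n) (t x y : ℝ) :
    Measurable (fun p : ℝ × ℝ => (Ioi p.1).indicator (Af n t x y) p.2) := by
  have heq : (fun p : ℝ × ℝ => (Ioi p.1).indicator (Af n t x y) p.2)
      = fun p : ℝ × ℝ => if p.1 < p.2 then Af n t x y p.2 else 0 := by
    funext p
    by_cases h : p.1 < p.2 <;> simp [indicator, mem_Ioi, h]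
  rw [heq]
  exact Measurable.ite (measurableSet_lt measurable_fst measurable_snd)
    ((Af_meas n hn t x y).comp measurable_snd) measurable_const

lemma inner_sm (n : ℕ) (hn : 1 ≤ n) (t x y : ℝ) :
    StronglyMeasurable (fun z => ∫ u in Ioi z, Af n t x y u) := by
  have h1 : (fun z => ∫ u in Ioi z, Af n t x y u)
      = fun z => ∫ u, (Ioi z).indicator (Af n t x y) u := by
    funext z
    rw [MeasureTheory.integral_indicator measurableSet_Ioi]
  rw [h1]
  exact ((indicator_meas n hn t x y).stronglyMeasurable).integral_prod_right'

end AiryAux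

open AiryAux

/-- for `x, y ∈ (0, ∞)` the kernel admits the representation
`K_{t,n}(x,y) = ∫_ℝ ( ∫_0^∞ Ai_n(x+z+s+t)·Ai_n(z+y+s+t) ds )·w'(z) dz`, with the inner
integral absolutely convergent for each `z` and the outer integral absolutely convergent. -/
theorem airy_kernel_representation
    (w : ℝ → ℝ) (hw_diff : Differentiable ℝ w)
    (hw_pos : ∀ x, 0 < deriv w x)
    (hw_top : Filter.Tendsto w Filter.atTop (nhds 1))
    (hw_bot : Filter.Tendsto w Filter.atBot (nhds 0))
    (hw_decay : ∃ ω > (0:ℝ), ∃ x₀ > (0:ℝ), ∀ x : ℝ, x₀ ≤ |x| → deriv w x ≤ Real.exp (-ω * |x|))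
    (t : ℝ) (n : ℕ) (hn : 1 ≤ n) :
    ∀ x ∈ Set.Ioi (0:ℝ), ∀ y ∈ Set.Ioi (0:ℝ),
      (∀ z : ℝ, IntegrableOn (fun s : ℝ => Ain n (x+z+s+t) * Ain n (z+y+s+t)) (Set.Ioi 0))
      ∧ Integrable (fun z : ℝ =>
          (∫ s in Set.Ioi (0:ℝ), Ain n (x+z+s+t) * Ain n (z+y+s+t)) * deriv w z)
      ∧ Kker w t n x y
          = ∫ z : ℝ, (∫ s in Set.Ioi (0:ℝ), Ain n (x+z+s+t) * Ain n (z+y+s+t)) * deriv w z := by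
  intro x hx y hy
  obtain ⟨ω, hω, x₀, hx₀, hbound⟩ := hw_decay
  obtain ⟨C, hC0, hC⟩ := gb_le t x y
  -- pointwise identity between the statement's integrand and the shifted kernel
  have hfun : ∀ z : ℝ, (fun s : ℝ => Ain n (x+z+s+t) * Ain n (z+y+s+t))
      = fun s : ℝ => Af n t x y (z+s) := by
    intro z
    funext s
    rw [Af]
    have e1 : x+z+s+t = x+(z+s)+t := by ring
    have e2 : z+y+s+t = (z+s)+y+t := by ring
    rw [e1, e2]
  have hinner : ∀ z : ℝ, (∫ s in Set.Ioi (0:ℝ), Ain n (x+z+s+t) * Ain n (z+y+s+t))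
      = ∫ u in Set.Ioi z, Af n t x y u := by
    intro z
    rw [hfun z, shift_integral n t x y z]
  -- first conjunct
  have hC1 : ∀ z : ℝ, IntegrableOn (fun s : ℝ => Ain n (x+z+s+t) * Ain n (z+y+s+t))
      (Set.Ioi 0) := by
    intro z
    rw [hfun z]
    exact shift_integrableOn n hn t x y z
  -- bound for the inner integral
  have hinner_bd : ∀ z : ℝ, |∫ u in Set.Ioi z, Af n t x y u| ≤ C * (|z|+1)^3 := by
    intro z
    calc |∫ u in Set.Ioi z, Af n t x y u| ≤ ∫ u in Set.Ioi z, |Af n t x y u| := by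
          simpa using norm_integral_le_integral_norm (μ := volume.restrict (Set.Ioi z))
            (Af n t x y)
      _ ≤ gb t x y z := (Af_Ioi_facts n hn t x y z).2
      _ ≤ C * (|z|+1)^3 := hC z
  have hcube := cube_W_integrable hw_diff hw_pos hω hx₀ hbound
  -- second conjunct
  have hC2 : Integrable (fun z : ℝ =>
      (∫ s in Set.Ioi (0:ℝ), Ain n (x+z+s+t) * Ain n (z+y+s+t)) * deriv w z) := by
    simp_rw [hinner]
    apply Integrable.mono' (hcube.const_mul C)
      (((inner_sm n hn t x y).measurable.mul (measurable_deriv w)).aestronglyMeasurable)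
    apply Filter.Eventually.of_forall
    intro z
    rw [Real.norm_eq_abs, Pi.mul_apply, abs_mul, abs_of_pos (hw_pos z)]
    calc |∫ u in Set.Ioi z, Af n t x y u| * deriv w z
        ≤ (C * (|z|+1)^3) * deriv w z :=
          mul_le_mul_of_nonneg_right (hinner_bd z) (hw_pos z).le
      _ = C * ((|z|+1)^3 * deriv w z) := by ring
  refine ⟨hC1, hC2, ?_⟩
  -- the Fubini argument
  set G : ℝ × ℝ → ℝ :=
    fun p => (Set.Ioi p.1).indicator (Af n t x y) p.2 * deriv w p.1 with hG_def
  have hGmeas : Measurable G :=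
    (indicator_meas n hn t x y).mul ((measurable_deriv w).comp measurable_fst)
  have hGnorm : ∀ z : ℝ, (∫ u, ‖G (z, u)‖)
      = (∫ u in Set.Ioi z, |Af n t x y u|) * deriv w z := by
    intro z
    have hpt : ∀ u : ℝ, ‖G (z, u)‖
        = (Set.Ioi z).indicator (fun u => |Af n t x y u|) u * deriv w z := by
      intro u
      show ‖(Set.Ioi z).indicator (Af n t x y) u * deriv w z‖ = _
      rw [Real.norm_eq_abs, abs_mul, abs_of_pos (hw_pos z)]
      congr 1
      by_cases h : u ∈ Set.Ioi z <;> simp [indicator, h]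
    simp_rw [hpt]
    rw [MeasureTheory.integral_mul_const, MeasureTheory.integral_indicator measurableSet_Ioi]
  have habs_bd : ∀ z : ℝ, (∫ u in Set.Ioi z, |Af n t x y u|) ≤ C * (|z|+1)^3 :=
    fun z => le_trans (Af_Ioi_facts n hn t x y z).2 (hC z)
  have hGint : Integrable G (volume.prod volume) := by
    rw [integrable_prod_iff hGmeas.aestronglyMeasurable]
    constructor
    · apply Filter.Eventually.of_forall
      intro z
      show Integrable (fun u => (Set.Ioi z).indicator (Af n t x y) u * deriv w z)
      exact ((integrable_indicator_iff measurableSet_Ioi).2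
        (Af_Ioi_facts n hn t x y z).1).mul_const _
    · apply Integrable.mono' (hcube.const_mul C)
      · exact ((hGmeas.norm.stronglyMeasurable).integral_prod_right').aestronglyMeasurable
      · apply Filter.Eventually.of_forall
        intro z
        rw [Real.norm_eq_abs, hGnorm z, abs_mul, abs_of_pos (hw_pos z),
          abs_of_nonneg (integral_nonneg (fun u => abs_nonneg _))]
        calc (∫ u in Set.Ioi z, |Af n t x y u|) * deriv w z
            ≤ (C * (|z|+1)^3) * deriv w z :=
              mul_le_mul_of_nonneg_right (habs_bd z) (hw_pos z).le
          _ = C * ((|z|+1)^3 * deriv w z) := by ring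
  have hswap : (∫ z, ∫ u, G (z, u)) = ∫ u, ∫ z, G (z, u) :=
    integral_integral_swap hGint
  have lhs_eq : ∀ z : ℝ, (∫ u, G (z, u))
      = (∫ u in Set.Ioi z, Af n t x y u) * deriv w z := by
    intro z
    show (∫ u, (Set.Ioi z).indicator (Af n t x y) u * deriv w z) = _
    rw [MeasureTheory.integral_mul_const, MeasureTheory.integral_indicator measurableSet_Ioi]
  have rhs_eq : ∀ u : ℝ, (∫ z, G (z, u)) = Af n t x y u * w u := by
    intro u
    have hfun2 : (fun z => G (z, u))
        = fun z => (Set.Iio u).indicator (deriv w) z * Af n t x y u := by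
      funext z
      show (Set.Ioi z).indicator (Af n t x y) u * deriv w z = _
      by_cases h : z < u
      · simp [indicator, mem_Ioi, mem_Iio, h, mul_comm]
      · have h' : ¬ (z < u) := h
        simp [indicator, mem_Ioi, mem_Iio, h']
    rw [hfun2, MeasureTheory.integral_mul_const, MeasureTheory.integral_indicator measurableSet_Iio,
      w_repr hw_diff hw_pos hw_bot hω hx₀ hbound u, mul_comm]
  have hK : Kker w t n x y = ∫ u, Af n t x y u * w u := by
    rw [Kker]
    rfl
  calc Kker w t n x y = ∫ u, Af n t x y u * w u := hK
    _ = ∫ u, ∫ z, G (z, u) := by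
        congr 1
        funext u
        rw [rhs_eq u]
    _ = ∫ z, ∫ u, G (z, u) := hswap.symm
    _ = ∫ z, (∫ u in Set.Ioi z, Af n t x y u) * deriv w z := by
        congr 1
        funext z
        rw [lhs_eq z]
    _ = ∫ z : ℝ, (∫ s in Set.Ioi (0:ℝ), Ain n (x+z+s+t) * Ain n (z+y+s+t)) * deriv w z := by
        congr 1
        funext z
        rw [hinner z]
end
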